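/- arXiv:2110.07637 — 2 statements merged into one kernel-verified Lean document; each statement's English description precedes it below -/
import Mathlib

section
/- Let n be an odd positive integer, a > 0, and let α, λ, g₀ be nonzero real numbers with αλ > 0, αg₀ > 0, |g₀| < 2|α|, and |λ| > 2|α| K a^{n+1}, where K = (1/(n+1)) · (n/(n+1))^n. Then for every t ∈ ℝ, t^n (t − a) g₀ + λ ≠ 0. -/
private lemma aux_amgm (n : ℕ) (u : ℝ) (hu : 0 ≤ u) :
    ((n : ℝ) + 1) * u ^ n ≤ (n : ℝ) * u ^ (n + 1) + 1 := by
  have h0 : ∀ k ∈ Finset.range n, 0 ≤ (u - 1) * (u ^ n - u ^ k) := by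
    intro k hk
    have hk' : k ≤ n := (Finset.mem_range.mp hk).le
    rcases le_or_gt 1 u with h1 | h1
    · exact mul_nonneg (by linarith) (by
        have := pow_le_pow_right₀ h1 hk'
        linarith)
    · have := pow_le_pow_of_le_one hu h1.le hk'
      nlinarith
  have h1 := Finset.sum_nonneg h0
  have h2 : ∑ k ∈ Finset.range n, (u - 1) * (u ^ n - u ^ k)
      = (n : ℝ) * ((u - 1) * u ^ n) - (u ^ n - 1) := by
    have hg : (∑ k ∈ Finset.range n, u ^ k) * (u - 1) = u ^ n - 1 := geom_sum_mul u n
    calc ∑ k ∈ Finset.range n, (u - 1) * (u ^ n - u ^ k)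
        = ∑ k ∈ Finset.range n, ((u - 1) * u ^ n - (u - 1) * u ^ k) := by
          apply Finset.sum_congr rfl; intro k _; ring
      _ = (n : ℝ) * ((u - 1) * u ^ n) - (u - 1) * ∑ k ∈ Finset.range n, u ^ k := by
          rw [Finset.sum_sub_distrib, Finset.sum_const, ← Finset.mul_sum]
          simp [nsmul_eq_mul]
      _ = (n : ℝ) * ((u - 1) * u ^ n) - (u ^ n - 1) := by rw [← hg]; ring
  rw [h2] at h1
  have hp : u ^ (n + 1) = u ^ n * u := pow_succ u n
  nlinarith [h1, hp]

private lemma aux_bound (n : ℕ) (hn' : 0 < n) (a t : ℝ) (ha : 0 < a) (ht : 0 ≤ t) :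
    ((n : ℝ) + 1) ^ (n + 1) * (t ^ n * (a - t)) ≤ (n : ℝ) ^ n * a ^ (n + 1) := by
  set N : ℝ := (n : ℝ) with hN
  have hNpos : (0 : ℝ) < N := by
    rw [hN]; exact_mod_cast hn'
  set u : ℝ := t * (N + 1) / (N * a) with hudef
  have hu0 : 0 ≤ u := by positivity
  have h1 := aux_amgm n u hu0
  have hue : u * (N * a) = t * (N + 1) := by
    rw [hudef, div_mul_cancel₀]; positivity
  have hsP : u ^ n * (N * a) ^ n = t ^ n * (N + 1) ^ n := by
    rw [← mul_pow, hue, mul_pow]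
  have hP : (0 : ℝ) < (N * a) ^ n := by positivity
  -- multiply h1 by (N*a)^n * a
  have h2 : ((N + 1) * u ^ n) * ((N * a) ^ n * a) ≤ (N * u ^ (n + 1) + 1) * ((N * a) ^ n * a) :=
    mul_le_mul_of_nonneg_right h1 (by positivity)
  have hp : u ^ (n + 1) = u ^ n * u := pow_succ u n
  have hgoal : (N + 1) ^ (n + 1) = (N + 1) ^ n * (N + 1) := pow_succ _ n
  have hNa : (N * a) ^ n * a = N ^ n * a ^ (n + 1) := by
    rw [mul_pow, pow_succ]; ring
  rw [← hN] at h1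
  have lhs_eq : (N + 1) * u ^ n * ((N * a) ^ n * a) = (N + 1) ^ (n + 1) * (t ^ n * a) := by
    calc (N + 1) * u ^ n * ((N * a) ^ n * a) = (u ^ n * (N * a) ^ n) * ((N + 1) * a) := by ring
      _ = t ^ n * (N + 1) ^ n * ((N + 1) * a) := by rw [hsP]
      _ = (N + 1) ^ (n + 1) * (t ^ n * a) := by rw [hgoal]; ring
  have rhs_eq : (N * u ^ (n + 1) + 1) * ((N * a) ^ n * a)
      = (N + 1) ^ (n + 1) * (t ^ n * t) + N ^ n * a ^ (n + 1) := by
    calc (N * u ^ (n + 1) + 1) * ((N * a) ^ n * a)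
        = (u ^ n * (N * a) ^ n) * (u * (N * a)) + (N * a) ^ n * a := by rw [hp]; ring
      _ = (t ^ n * (N + 1) ^ n) * (t * (N + 1)) + N ^ n * a ^ (n + 1) := by
          rw [hsP, hue, hNa]
      _ = (N + 1) ^ (n + 1) * (t ^ n * t) + N ^ n * a ^ (n + 1) := by rw [hgoal]; ring
  rw [lhs_eq, rhs_eq] at h2
  nlinarith [h2]

private lemma pos_case (n : ℕ) (hn : Odd n) (hn' : 0 < n)
    (a : ℝ) (ha : 0 < a) (lam g₀ : ℝ) (hg : 0 < g₀)
    (hlam2 : g₀ * ((n : ℝ) ^ n * a ^ (n + 1) / ((n : ℝ) + 1) ^ (n + 1)) < lam) (t : ℝ) :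
    0 < t ^ n * (t - a) * g₀ + lam := by
  have hNpos : (0 : ℝ) < (n : ℝ) := by exact_mod_cast hn'
  have hKpos : 0 < (n : ℝ) ^ n * a ^ (n + 1) / ((n : ℝ) + 1) ^ (n + 1) := by positivity
  have hlampos : 0 < lam := lt_trans (by positivity) hlam2
  rcases le_or_gt t 0 with ht | ht
  · have h1 : t ^ n ≤ 0 := hn.pow_nonpos ht
    have h2 : t - a ≤ 0 := by linarith
    have h3 : 0 ≤ t ^ n * (t - a) := by nlinarith
    nlinarith
  · have hb := aux_bound n hn' a t ha ht.le
    have hsq : (0 : ℝ) < ((n : ℝ) + 1) ^ (n + 1) := by positivity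
    have hb2 : t ^ n * (a - t) ≤ (n : ℝ) ^ n * a ^ (n + 1) / ((n : ℝ) + 1) ^ (n + 1) := by
      rw [le_div_iff₀ hsq]
      nlinarith [hb]
    have hb3 : t ^ n * (a - t) * g₀ ≤ ((n : ℝ) ^ n * a ^ (n + 1) / ((n : ℝ) + 1) ^ (n + 1)) * g₀ :=
      mul_le_mul_of_nonneg_right hb2 hg.le
    nlinarith [hb3]

/-- For `n` odd positive, `a > 0`, and nonzero reals `α, λ, g₀` with
`αλ > 0`, `αg₀ > 0`, `|g₀| < 2|α|` and `|λ| > 2|α| K a^(n+1)` where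
`K = (1/(n+1)) (n/(n+1))^n`, one has `t^n (t − a) g₀ + λ ≠ 0` for every `t ∈ ℝ`. -/
theorem odd_modification_no_real_root (n : ℕ) (hn : Odd n) (hn' : 0 < n)
    (a : ℝ) (ha : 0 < a) (α lam g₀ : ℝ)
    (hα : α ≠ 0) (hlam : lam ≠ 0) (hg₀ : g₀ ≠ 0)
    (hαlam : α * lam > 0) (hαg : α * g₀ > 0) (hgsmall : |g₀| < 2 * |α|)
    (hlambig : |lam| > 2 * |α| * ((1 / ((n : ℝ) + 1)) * ((n : ℝ) / ((n : ℝ) + 1)) ^ n)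
        * a ^ (n + 1)) (t : ℝ) :
    t ^ n * (t - a) * g₀ + lam ≠ 0 := by
  have hNpos : (0 : ℝ) < (n : ℝ) := by exact_mod_cast hn'
  have hN1 : ((n : ℝ) + 1) ≠ 0 := by positivity
  have hKeq : (1 / ((n : ℝ) + 1)) * ((n : ℝ) / ((n : ℝ) + 1)) ^ n * a ^ (n + 1)
      = (n : ℝ) ^ n * a ^ (n + 1) / ((n : ℝ) + 1) ^ (n + 1) := by
    rw [div_pow, pow_succ]
    field_simp
    ring
  have hKpos : 0 < (n : ℝ) ^ n * a ^ (n + 1) / ((n : ℝ) + 1) ^ (n + 1) := by positivity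
  rcases lt_or_gt_of_ne hα with hneg | hpos
  · -- α < 0 : then lam < 0, g₀ < 0
    have hlamneg : lam < 0 := by nlinarith
    have hgneg : g₀ < 0 := by nlinarith
    have habs : |lam| = -lam := abs_of_neg hlamneg
    have habsα : |α| = -α := abs_of_neg hneg
    have hgabs : |g₀| = -g₀ := abs_of_neg hgneg
    have hkey : (-g₀) * ((n : ℝ) ^ n * a ^ (n + 1) / ((n : ℝ) + 1) ^ (n + 1)) < -lam := by
      rw [habs, habsα] at hlambig
      rw [mul_assoc, hKeq] at hlambig
      rw [habsα, hgabs] at hgsmall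
      nlinarith
    have := pos_case n hn hn' a ha (-lam) (-g₀) (by linarith) hkey t
    intro h
    nlinarith
  · have hlampos : 0 < lam := by nlinarith
    have hgpos : 0 < g₀ := by nlinarith
    have habs : |lam| = lam := abs_of_pos hlampos
    have habsα : |α| = α := abs_of_pos hpos
    have hgabs : |g₀| = g₀ := abs_of_pos hgpos
    have hkey : g₀ * ((n : ℝ) ^ n * a ^ (n + 1) / ((n : ℝ) + 1) ^ (n + 1)) < lam := by
      rw [habs, habsα] at hlambig
      rw [mul_assoc, hKeq] at hlambig
      rw [habsα, hgabs] at hgsmall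
      nlinarith
    have := pos_case n hn hn' a ha lam g₀ hgpos hkey t
    intro h
    linarith
end

section
/- Let n be an even positive integer, a > 0, and let α, λ, g₀ be nonzero real numbers with αλ > 0, αg₀ > 0, |g₀| < 2|α|, and |λ| > 2|α| K a^{n+1}, where K = (1/(n+2)) · (n/(n+2))^{n/2}. Then for every t ∈ ℝ, t^n (t² − a²) g₀ + 2aλ ≠ 0. -/
private lemma emnrr_core2 (m : ℕ) (t : ℝ) (h1 : -1 ≤ t) (h2 : t ≤ 1) :
    (1 + t) ^ m * (1 - (m : ℝ) * t) ≤ 1 := by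
  have hp : (0:ℝ) ≤ (1 + t) ^ m := pow_nonneg (by linarith) m
  rcases le_or_gt (1 - (m:ℝ) * t) 0 with h | h
  · have := mul_nonpos_of_nonneg_of_nonpos hp h
    linarith
  · have hb : 1 - (m:ℝ) * t ≤ (1 - t) ^ m := by
      have := one_add_mul_le_pow (a := -t) (by linarith) m
      rw [← sub_eq_add_neg] at this; linarith
    calc (1 + t) ^ m * (1 - (m:ℝ) * t) ≤ (1 + t) ^ m * (1 - t) ^ m :=
          mul_le_mul_of_nonneg_left hb hp
      _ = (1 - t ^ 2) ^ m := by rw [← mul_pow]; ring_nf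
      _ ≤ 1 := pow_le_one₀ (by nlinarith) (by nlinarith)

private lemma emnrr_core (m : ℕ) (hm : 0 < m) (x : ℝ) (h0 : 0 ≤ x) (h1 : x ≤ 1) :
    ((m:ℝ) + 1) ^ (m + 1) * (x ^ m * (1 - x)) ≤ (m:ℝ) ^ m := by
  have hmR : (0:ℝ) < m := by exact_mod_cast hm
  have hm1 : (1:ℝ) ≤ m := by exact_mod_cast hm
  set s : ℝ := (((m:ℝ) + 1) * x - m) / m with hs
  have h1t : (1 + s) * m = ((m:ℝ) + 1) * x := by
    rw [hs, add_mul, div_mul_cancel₀ _ hmR.ne']; ring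
  have hmt : 1 - (m:ℝ) * s = ((m:ℝ) + 1) * (1 - x) := by
    rw [hs, mul_div_assoc', mul_comm (m:ℝ), mul_div_assoc, div_self hmR.ne', mul_one]; ring
  have hsl : -1 ≤ s := by
    rw [hs, le_div_iff₀ hmR]; nlinarith
  have hsu : s ≤ 1 := by
    rw [hs, div_le_iff₀ hmR]; nlinarith
  have hle := emnrr_core2 m s hsl hsu
  have e1 : (m:ℝ) ^ m * (1 + s) ^ m = (((m:ℝ) + 1) * x) ^ m := by
    rw [← mul_pow, mul_comm, h1t]
  calc ((m:ℝ) + 1) ^ (m + 1) * (x ^ m * (1 - x))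
      = (((m:ℝ) + 1) * x) ^ m * (((m:ℝ) + 1) * (1 - x)) := by
        rw [mul_pow]; ring
    _ = (m:ℝ) ^ m * ((1 + s) ^ m * (1 - (m:ℝ) * s)) := by
        rw [← e1, hmt]; ring
    _ ≤ (m:ℝ) ^ m * 1 := mul_le_mul_of_nonneg_left hle (pow_nonneg hmR.le m)
    _ = (m:ℝ) ^ m := mul_one _

/-- For `n` even positive, `a > 0`, and nonzero reals `α, λ, g₀` with
`αλ > 0`, `αg₀ > 0`, `|g₀| < 2|α|` and `|λ| > 2|α| K a^(n+1)` where
`K = (1/(n+2)) (n/(n+2))^(n/2)`, one has `t^n (t² − a²) g₀ + 2aλ ≠ 0` for every `t ∈ ℝ`. -/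
theorem even_modification_no_real_root (n : ℕ) (hn : Even n) (hn' : 0 < n)
    (a : ℝ) (ha : 0 < a) (α lam g₀ : ℝ)
    (hα : α ≠ 0) (hlam : lam ≠ 0) (hg₀ : g₀ ≠ 0)
    (hαlam : α * lam > 0) (hαg : α * g₀ > 0) (hgsmall : |g₀| < 2 * |α|)
    (hlamtbig : |lam| > 2 * |α| * ((1 / ((n : ℝ) + 2)) * ((n : ℝ) / ((n : ℝ) + 2)) ^ (n / 2))
        * a ^ (n + 1)) (t : ℝ) :
    t ^ n * (t ^ 2 - a ^ 2) * g₀ + 2 * a * lam ≠ 0 := by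
  obtain ⟨m, hm2⟩ : ∃ m, n = 2 * m := by
    obtain ⟨r, hr⟩ := hn; exact ⟨r, by omega⟩
  have hm : 0 < m := by omega
  have hmR : (0:ℝ) < m := by exact_mod_cast hm
  have hm1 : (0:ℝ) < (m:ℝ) + 1 := by linarith
  subst hm2
  have htn : t ^ (2 * m) = (t ^ 2) ^ m := by rw [pow_mul]
  intro heq
  rcases le_or_gt (t ^ 2) (a ^ 2) with hcase | hcase
  · -- |t| ≤ a : size argument
    have hx0 : 0 ≤ t ^ 2 / a ^ 2 := by positivity
    have hx1 : t ^ 2 / a ^ 2 ≤ 1 := by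
      rw [div_le_one (by positivity)]; exact hcase
    have hcore := emnrr_core m hm (t ^ 2 / a ^ 2) hx0 hx1
    -- translate core to a bound on -P
    have hbound : (t ^ 2) ^ m * (a ^ 2 - t ^ 2) ≤
        (m:ℝ) ^ m / ((m:ℝ) + 1) ^ (m + 1) * a ^ (2 * m + 2) := by
      have ha2 : (0:ℝ) < a ^ 2 := by positivity
      have e : (t ^ 2 / a ^ 2) ^ m * (1 - t ^ 2 / a ^ 2) * a ^ (2 * m + 2)
          = (t ^ 2) ^ m * (a ^ 2 - t ^ 2) := by
        have hpow : a ^ (2 * m + 2) = (a ^ 2) ^ m * a ^ 2 := by rw [pow_add, pow_mul]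
        rw [hpow, div_pow]
        field_simp
      rw [← e, div_mul_eq_mul_div, le_div_iff₀ (by positivity : (0:ℝ) < ((m:ℝ) + 1) ^ (m + 1))]
      have hap : (0:ℝ) ≤ a ^ (2 * m + 2) := by positivity
      calc (t ^ 2 / a ^ 2) ^ m * (1 - t ^ 2 / a ^ 2) * a ^ (2 * m + 2) * ((m:ℝ) + 1) ^ (m + 1)
          = ((m:ℝ) + 1) ^ (m + 1) * ((t ^ 2 / a ^ 2) ^ m * (1 - t ^ 2 / a ^ 2)) * a ^ (2 * m + 2) := by
            ring
        _ ≤ (m:ℝ) ^ m * a ^ (2 * m + 2) := mul_le_mul_of_nonneg_right hcore hap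
    have hPle : |t ^ (2 * m) * (t ^ 2 - a ^ 2)| ≤
        (m:ℝ) ^ m / ((m:ℝ) + 1) ^ (m + 1) * a ^ (2 * m + 2) := by
      rw [htn, abs_of_nonpos (mul_nonpos_of_nonneg_of_nonpos (by positivity) (by linarith))]
      calc -((t ^ 2) ^ m * (t ^ 2 - a ^ 2)) = (t ^ 2) ^ m * (a ^ 2 - t ^ 2) := by ring
        _ ≤ _ := hbound
    -- K identity
    have hK : 2 * |α| * ((1 / ((2 * m : ℕ) + 2 : ℝ)) * (((2 * m : ℕ) : ℝ) / (((2 * m : ℕ) : ℝ) + 2)) ^ ((2 * m) / 2))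
          * a ^ (2 * m + 1) * (2 * a)
        = 2 * |α| * ((m:ℝ) ^ m / ((m:ℝ) + 1) ^ (m + 1) * a ^ (2 * m + 2)) := by
      have hd : (2 * m) / 2 = m := by omega
      rw [hd]
      push_cast
      have h3 : (2 * (m:ℝ)) / (2 * (m:ℝ) + 2) = (m:ℝ) / ((m:ℝ) + 1) := by
        rw [show (2 * (m:ℝ) + 2) = 2 * ((m:ℝ) + 1) by ring,
          mul_div_mul_left _ _ (two_ne_zero)]
      rw [h3, div_pow]
      have h2 : ((m:ℝ) + 1) ≠ 0 := by positivity
      field_simp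
      ring
    -- now contradiction
    have habs : |t ^ (2 * m) * (t ^ 2 - a ^ 2) * g₀| = |2 * a * lam| := by
      have : t ^ (2 * m) * (t ^ 2 - a ^ 2) * g₀ = -(2 * a * lam) := by linarith
      rw [this, abs_neg]
    have hMpos : (0:ℝ) < (m:ℝ) ^ m / ((m:ℝ) + 1) ^ (m + 1) * a ^ (2 * m + 2) := by positivity
    have hlt : |t ^ (2 * m) * (t ^ 2 - a ^ 2) * g₀| < |2 * a * lam| := by
      rw [abs_mul]
      calc |t ^ (2 * m) * (t ^ 2 - a ^ 2)| * |g₀|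
          ≤ ((m:ℝ) ^ m / ((m:ℝ) + 1) ^ (m + 1) * a ^ (2 * m + 2)) * |g₀| :=
            mul_le_mul_of_nonneg_right hPle (abs_nonneg _)
        _ < ((m:ℝ) ^ m / ((m:ℝ) + 1) ^ (m + 1) * a ^ (2 * m + 2)) * (2 * |α|) :=
            mul_lt_mul_of_pos_left hgsmall hMpos
        _ = 2 * |α| * ((1 / ((2 * m : ℕ) + 2 : ℝ)) * (((2 * m : ℕ) : ℝ) / (((2 * m : ℕ) : ℝ) + 2)) ^ ((2 * m) / 2))
              * a ^ (2 * m + 1) * (2 * a) := by rw [hK]; ring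
        _ < |lam| * (2 * a) := by
            have h2a : (0:ℝ) < 2 * a := by linarith
            exact mul_lt_mul_of_pos_right hlamtbig h2a
        _ = |2 * a * lam| := by
            rw [abs_mul, abs_of_pos (by linarith : (0:ℝ) < 2 * a)]; ring
    rw [habs] at hlt
    exact lt_irrefl _ hlt
  · -- |t| > a : sign argument
    have ht0 : t ≠ 0 := by
      intro h; rw [h] at hcase; simp at hcase; nlinarith
    have hP : 0 < t ^ (2 * m) * (t ^ 2 - a ^ 2) := by
      rw [htn]
      have : 0 < (t ^ 2) ^ m := by positivity
      nlinarith
    have : 0 < α * (t ^ (2 * m) * (t ^ 2 - a ^ 2) * g₀ + 2 * a * lam) := by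
      have h1 : 0 < t ^ (2 * m) * (t ^ 2 - a ^ 2) * (α * g₀) := by positivity
      nlinarith
    rw [heq, mul_zero] at this
    exact lt_irrefl _ this
end
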